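/- arXiv:1911.01348 — 5 statements merged into one kernel-verified Lean document; each statement's English description precedes it below -/
import Mathlib

section
/- Let m̄, m, V be real numbers with 0 < m̄, m̄ ≤ 2*m, 0 < m, m < V, and m̄ < V. Then m * Real.log (m̄ / m) + (V - m) * Real.log ((V - m̄) / (V - m)) ≤ -(m - m̄)^2 / (4 * m). -/
open Real Set

private lemma log_one_add_le_aux (u : ℝ) (h1 : -1 < u) (h2 : u ≤ 1) :
    Real.log (1 + u) ≤ u - u ^ 2 / 4 := by
  set f : ℝ → ℝ := fun x => x - x ^ 2 / 4 - Real.log (1 + x) with hf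
  have hderiv : ∀ x : ℝ, -1 < x → HasDerivAt f (1 - x / 2 - 1 / (1 + x)) x := by
    intro x hx
    have h1x : (1 : ℝ) + x ≠ 0 := by linarith
    have hlog : HasDerivAt (fun y : ℝ => Real.log (1 + y)) (1 / (1 + x)) x := by
      have := ((hasDerivAt_id x).const_add (1 : ℝ)).log h1x
      simpa using this
    have hpoly : HasDerivAt (fun y : ℝ => y - y ^ 2 / 4) (1 - x / 2) x := by
      have := (hasDerivAt_id x).sub ((hasDerivAt_pow 2 x).div_const 4)
      exact this.congr_deriv (by norm_num; ring)
    exact hpoly.sub hlog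
  have f0 : f 0 = 0 := by simp [hf]
  suffices h : 0 ≤ f u by
    have : f u = u - u ^ 2 / 4 - Real.log (1 + u) := rfl
    linarith [this ▸ h]
  rcases le_or_gt 0 u with hu | hu
  · have mono : MonotoneOn f (Set.Icc (0 : ℝ) 1) := by
      apply monotoneOn_of_deriv_nonneg (convex_Icc 0 1)
      · intro x hx
        exact (hderiv x (by linarith [hx.1])).continuousAt.continuousWithinAt
      · intro x hx
        rw [interior_Icc] at hx
        exact ((hderiv x (by linarith [hx.1])).differentiableAt.differentiableWithinAt)
      · intro x hx
        rw [interior_Icc] at hx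
        have hx1 : -1 < x := by linarith [hx.1]
        rw [(hderiv x hx1).deriv]
        have hxp : (0 : ℝ) < 1 + x := by linarith
        have key : 1 / (1 + x) ≤ 1 - x / 2 := by
          rw [div_le_iff₀ hxp]
          nlinarith [hx.1, hx.2]
        linarith
    have := mono (Set.mem_Icc.mpr ⟨le_refl 0, by norm_num⟩)
      (Set.mem_Icc.mpr ⟨hu, h2⟩) hu
    linarith
  · have anti : AntitoneOn f (Set.Icc u 0) := by
      apply antitoneOn_of_deriv_nonpos (convex_Icc u 0)
      · intro x hx
        exact (hderiv x (by linarith [hx.1])).continuousAt.continuousWithinAt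
      · intro x hx
        rw [interior_Icc] at hx
        exact ((hderiv x (by linarith [hx.1])).differentiableAt.differentiableWithinAt)
      · intro x hx
        rw [interior_Icc] at hx
        have hx1 : -1 < x := by linarith [hx.1]
        rw [(hderiv x hx1).deriv]
        have hxp : (0 : ℝ) < 1 + x := by linarith
        have key : 1 - x / 2 ≤ 1 / (1 + x) := by
          rw [le_div_iff₀ hxp]
          nlinarith [hx.2]
        linarith
    have := anti (Set.mem_Icc.mpr ⟨le_refl u, hu.le⟩)
      (Set.mem_Icc.mpr ⟨hu.le, le_refl 0⟩) hu.le
    linarith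

theorem stmt_4 (mbar m V : ℝ) (h1 : 0 < mbar) (h2 : mbar ≤ 2 * m) (h3 : 0 < m)
    (h4 : m < V) (h5 : mbar < V) :
    m * Real.log (mbar / m) + (V - m) * Real.log ((V - mbar) / (V - m)) ≤
      -(m - mbar) ^ 2 / (4 * m) := by
  have hm : m ≠ 0 := ne_of_gt h3
  have hVm : (0 : ℝ) < V - m := by linarith
  set u : ℝ := (mbar - m) / m with hu
  have hu1 : -1 < u := by
    rw [hu, lt_div_iff₀ h3]
    linarith
  have hu2 : u ≤ 1 := by
    rw [hu, div_le_one h3]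
    linarith
  have hrw : mbar / m = 1 + u := by
    rw [hu]
    field_simp
    ring
  have key1 : Real.log (mbar / m) ≤ u - u ^ 2 / 4 := by
    rw [hrw]
    exact log_one_add_le_aux u hu1 hu2
  have key2 : Real.log ((V - mbar) / (V - m)) ≤ (m - mbar) / (V - m) := by
    have hpos : 0 < (V - mbar) / (V - m) := div_pos (by linarith) hVm
    have h := Real.log_le_sub_one_of_pos hpos
    have heq : (V - mbar) / (V - m) - 1 = (m - mbar) / (V - m) := by
      field_simp
      ring
    linarith [heq ▸ h]
  have e1 : m * Real.log (mbar / m) ≤ m * (u - u ^ 2 / 4) :=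
    mul_le_mul_of_nonneg_left key1 h3.le
  have e2 : (V - m) * Real.log ((V - mbar) / (V - m)) ≤ (V - m) * ((m - mbar) / (V - m)) :=
    mul_le_mul_of_nonneg_left key2 hVm.le
  have hu3 : m * (u - u ^ 2 / 4) = (mbar - m) - (m - mbar) ^ 2 / (4 * m) := by
    rw [hu]
    field_simp
    ring
  have hv : (V - m) * ((m - mbar) / (V - m)) = m - mbar := by
    field_simp
  have hfin : -(m - mbar) ^ 2 / (4 * m) = (mbar - m) - (m - mbar) ^ 2 / (4 * m) + (m - mbar) := by
    ring
  linarith [e1, e2, hu3 ▸ e1, hv ▸ e2]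
end

section
/- For every natural number m ≥ 24, the product over integers j with ⌊m/3⌋ + 1 ≤ j ≤ ⌊m/2⌋ of j / (m - j + 1) is at most Real.exp (-(m : ℝ) / 24). -/
set_option maxHeartbeats 1000000

open Finset

/-- Sum of `m + 1 - 2j` over `Ioc a c`. -/
lemma sum_aux (m a c : ℕ) (hac : a ≤ c) :
    (∑ j ∈ Finset.Ioc a c, ((m : ℝ) + 1 - 2 * j)) =
      ((c : ℝ) - a) * ((m : ℝ) - a - c) := by
  induction c, hac using Nat.le_induction with
  | base => simp
  | succ c hac ih =>
      rw [Finset.sum_Ioc_succ_top (by omega : a ≤ c), ih]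
      push_cast
      ring

/-- Lower bound for the sum of `(m+1-2j)/(m-j+1)` over `Ioc a c`,
assuming `2*c ≤ m` and `a < c` conditions. -/
lemma sum_div_lb (m a c : ℕ) (hac : a ≤ c) (hcm : 2 * c ≤ m) (ham : a < m) :
    ((c : ℝ) - a) * ((m : ℝ) - a - c) / ((m : ℝ) - a) ≤
      ∑ j ∈ Finset.Ioc a c, ((m : ℝ) + 1 - 2 * j) / ((m : ℝ) - j + 1) := by
  have hma : (0 : ℝ) < (m : ℝ) - a := by
    have := Nat.cast_lt (α := ℝ) |>.mpr ham
    linarith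
  rw [← sum_aux m a c hac, Finset.sum_div]
  apply Finset.sum_le_sum
  intro j hj
  simp only [Finset.mem_Ioc] at hj
  have hj1 : a < j := hj.1
  have hj2 : j ≤ c := hj.2
  have hnum : (0 : ℝ) ≤ (m : ℝ) + 1 - 2 * j := by
    have : 2 * j ≤ m := by omega
    have := Nat.cast_le (α := ℝ) |>.mpr this
    push_cast at this ⊢
    linarith
  have hden1 : (0 : ℝ) < (m : ℝ) - j + 1 := by
    have : j ≤ m := by omega
    have := Nat.cast_le (α := ℝ) |>.mpr this
    linarith
  have hden2 : (m : ℝ) - j + 1 ≤ (m : ℝ) - a := by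
    have : a + 1 ≤ j := hj1
    have := Nat.cast_le (α := ℝ) |>.mpr this
    push_cast at this
    linarith
  exact div_le_div_of_nonneg_left hnum hden1 hden2

theorem stmt_5 (m : ℕ) (hm : 24 ≤ m) :
    (∏ j ∈ Finset.Icc (m / 3 + 1) (m / 2), ((j : ℝ) / ((m : ℝ) - (j : ℝ) + 1))) ≤
      Real.exp (-(m : ℝ) / 24) := by
  set a := m / 3 with ha
  set b := m / 2 with hb
  set c := 5 * m / 12 with hc
  have hab : a ≤ b := by omega
  have hacn : a ≤ c := by omega
  have hcbn : c ≤ b := by omega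
  have hIcc : Finset.Icc (a + 1) b = Finset.Ioc a b := by
    rw [← Finset.Icc_add_one_left_eq_Ioc]
  -- Step 1: pointwise bound by exponentials
  have step1 : (∏ j ∈ Finset.Ioc a b, ((j : ℝ) / ((m : ℝ) - j + 1))) ≤
      ∏ j ∈ Finset.Ioc a b, Real.exp (-(((m : ℝ) + 1 - 2 * j) / ((m : ℝ) - j + 1))) := by
    apply Finset.prod_le_prod
    · intro j hj
      simp only [Finset.mem_Ioc] at hj
      have hden : (0 : ℝ) < (m : ℝ) - j + 1 := by
        have : j ≤ m := by omega
        have := Nat.cast_le (α := ℝ) |>.mpr this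
        linarith
      positivity
    · intro j hj
      simp only [Finset.mem_Ioc] at hj
      have hden : (0 : ℝ) < (m : ℝ) - j + 1 := by
        have : j ≤ m := by omega
        have := Nat.cast_le (α := ℝ) |>.mpr this
        linarith
      have heq : (j : ℝ) / ((m : ℝ) - j + 1) =
          -(((m : ℝ) + 1 - 2 * j) / ((m : ℝ) - j + 1)) + 1 := by
        field_simp
        ring
      rw [heq]
      exact Real.add_one_le_exp _
  rw [hIcc]
  refine step1.trans ?_
  rw [← Real.exp_sum]
  apply Real.exp_le_exp.mpr
  rw [Finset.sum_neg_distrib]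
  have hsum : (m : ℝ) / 24 ≤
      ∑ j ∈ Finset.Ioc a b, ((m : ℝ) + 1 - 2 * j) / ((m : ℝ) - j + 1) := by
    have hsplit : (∑ j ∈ Finset.Ioc a b, ((m : ℝ) + 1 - 2 * j) / ((m : ℝ) - j + 1)) =
        (∑ j ∈ Finset.Ioc a c, ((m : ℝ) + 1 - 2 * j) / ((m : ℝ) - j + 1)) +
        (∑ j ∈ Finset.Ioc c b, ((m : ℝ) + 1 - 2 * j) / ((m : ℝ) - j + 1)) := by
      rw [Finset.sum_Ioc_consecutive _ hacn hcbn]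
    rw [hsplit]
    have h1 := sum_div_lb m a c hacn (by omega) (by omega)
    have h2 := sum_div_lb m c b hcbn (by omega) (by omega)
    have hfinal : (m : ℝ) / 24 ≤
        ((c : ℝ) - a) * ((m : ℝ) - a - c) / ((m : ℝ) - a) +
        ((b : ℝ) - c) * ((m : ℝ) - c - b) / ((m : ℝ) - c) := by
      have hma : (0 : ℝ) < (m : ℝ) - a := by
        have : a < m := by omega
        have := Nat.cast_lt (α := ℝ) |>.mpr this
        linarith
      have hmc : (0 : ℝ) < (m : ℝ) - c := by
        have : c < m := by omega
        have := Nat.cast_lt (α := ℝ) |>.mpr this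
        linarith
      -- nat facts about a, b, c
      have f1 : 3 * a ≤ m := by omega
      have f2 : m ≤ 3 * a + 2 := by omega
      have f3 : 2 * b ≤ m := by omega
      have f4 : m ≤ 2 * b + 1 := by omega
      have f5 : 12 * c ≤ 5 * m := by omega
      have f6 : 5 * m ≤ 12 * c + 11 := by omega
      have g1 := Nat.cast_le (α := ℝ) |>.mpr f1
      have g2 := Nat.cast_le (α := ℝ) |>.mpr f2
      have g3 := Nat.cast_le (α := ℝ) |>.mpr f3
      have g4 := Nat.cast_le (α := ℝ) |>.mpr f4
      have g5 := Nat.cast_le (α := ℝ) |>.mpr f5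
      have g6 := Nat.cast_le (α := ℝ) |>.mpr f6
      have gm := Nat.cast_le (α := ℝ) |>.mpr hm
      push_cast at g1 g2 g3 g4 g5 g6 gm
      rw [div_add_div _ _ (ne_of_gt hma) (ne_of_gt hmc), le_div_iff₀ (by positivity)]
      have h0m : (0:ℝ) ≤ m := by positivity
      have hx0 : (0:ℝ) ≤ (m:ℝ) - 3*a := by linarith
      have hx2 : (m:ℝ) - 3*a ≤ 2 := by linarith
      have hy0 : (0:ℝ) ≤ (m:ℝ) - 2*b := by linarith
      have hy1 : (m:ℝ) - 2*b ≤ 1 := by linarith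
      have hz0 : (0:ℝ) ≤ 5*(m:ℝ) - 12*c := by linarith
      have hz11 : 5*(m:ℝ) - 12*c ≤ 11 := by linarith
      nlinarith [mul_nonneg (mul_nonneg h0m (by linarith : (0:ℝ) ≤ 1 - ((m:ℝ)-2*b))) (by linarith : (0:ℝ) ≤ 1 + ((m:ℝ)-2*b)),
        mul_nonneg (mul_nonneg hx0 (by linarith : (0:ℝ) ≤ 1 - ((m:ℝ)-2*b))) (by linarith : (0:ℝ) ≤ 1 + ((m:ℝ)-2*b)),
        mul_nonneg (mul_nonneg h0m (by linarith : (0:ℝ) ≤ 11 - (5*(m:ℝ)-12*c))) (by linarith : (0:ℝ) ≤ 11 + (5*(m:ℝ)-12*c)),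
        mul_nonneg (by linarith : (0:ℝ) ≤ 11 - (5*(m:ℝ)-12*c)) (by nlinarith : (0:ℝ) ≤ 121 + 11*(5*(m:ℝ)-12*c) + (5*(m:ℝ)-12*c)^2),
        mul_nonneg (mul_nonneg h0m (by linarith : (0:ℝ) ≤ (m:ℝ) - 24)) (by linarith : (0:ℝ) ≤ (m:ℝ) + 24),
        mul_nonneg (mul_nonneg h0m h0m) hx0,
        mul_nonneg (mul_nonneg h0m h0m) hz0,
        mul_nonneg (mul_nonneg h0m hx0) hx0,
        mul_nonneg (mul_nonneg h0m hx0) hz0,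
        mul_nonneg (mul_nonneg hx0 hx0) hz0,
        mul_nonneg (mul_nonneg hx0 hz0) hz0]
    linarith
  linarith
end

section
/- Let V, m be natural numbers with m ≥ 24 and 2*m ≤ V, and set V₁ = ⌊V/2⌋ and V₂ = ⌈V/2⌉. Then ∑_{j = ⌊m/3⌋+1}^{2⌊m/3⌋} C(V₁, j) * C(V₂, m - j) ≥ C(V, m) * (1 - (2*m/3) * Real.exp (-(m:ℝ)/24)), where C(a,b) denotes the binomial coefficient a choose b. -/
open Finset

lemma aux_gstep (k : ℕ) (hk : 1 ≤ k) :
    16 * k * (k.choose (k / 2)) ^ 2 ≤ (k + 2) * ((k + 2).choose ((k + 2) / 2)) ^ 2 := by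
  rcases Nat.even_or_odd k with ⟨t, ht⟩ | ⟨t, ht⟩
  · subst ht
    have ht1 : 1 ≤ t := by omega
    have hdiv1 : (t + t) / 2 = t := by omega
    have hdiv2 : (t + t + 2) / 2 = t + 1 := by omega
    have h2t : t + t = 2 * t := by ring
    rw [hdiv1, hdiv2, h2t]
    have h1 : (2 * t + 2) * (2 * t + 1).choose t = (2 * t + 2).choose (t + 1) * (t + 1) := by
      simpa [Nat.succ_eq_add_one] using Nat.add_one_mul_choose_eq (2 * t + 1) t
    have h2 : (2 * t + 1) * (2 * t).choose t = (2 * t + 1).choose (t + 1) * (t + 1) := by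
      simpa [Nat.succ_eq_add_one] using Nat.add_one_mul_choose_eq (2 * t) t
    have h3 : (2 * t + 1).choose (t + 1) = (2 * t + 1).choose t := Nat.choose_symm_half t
    have hcomb : (2 * t + 2).choose (t + 1) * ((t + 1) * (t + 1)) =
        (2 * t + 2) * ((2 * t + 1) * (2 * t).choose t) := by
      calc (2 * t + 2).choose (t + 1) * ((t + 1) * (t + 1))
          = ((2 * t + 2).choose (t + 1) * (t + 1)) * (t + 1) := by ring
        _ = ((2 * t + 2) * (2 * t + 1).choose t) * (t + 1) := by rw [h1]
        _ = (2 * t + 2) * ((2 * t + 1).choose (t + 1) * (t + 1)) := by rw [h3]; ring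
        _ = (2 * t + 2) * ((2 * t + 1) * (2 * t).choose t) := by rw [h2]
    have hsq := congrArg (fun x => x ^ 2) hcomb
    have hpos : 0 < ((t + 1) * (t + 1)) ^ 2 := by positivity
    refine Nat.le_of_mul_le_mul_right ?_ hpos
    calc 16 * (2 * t) * ((2 * t).choose t) ^ 2 * ((t + 1) * (t + 1)) ^ 2
        = 32 * t * (t + 1) ^ 4 * ((2 * t).choose t) ^ 2 := by ring
      _ ≤ (2 * t + 2) ^ 3 * (2 * t + 1) ^ 2 * ((2 * t).choose t) ^ 2 := by
          have : 32 * t * (t + 1) ^ 4 ≤ (2 * t + 2) ^ 3 * (2 * t + 1) ^ 2 := by nlinarith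
          exact Nat.mul_le_mul_right _ this
      _ = (2 * t + 2) * ((2 * t + 2) * ((2 * t + 1) * (2 * t).choose t)) ^ 2 := by ring
      _ = (2 * t + 2) * ((2 * t + 2).choose (t + 1) * ((t + 1) * (t + 1))) ^ 2 := by rw [hsq]
      _ = (2 * t + 2) * ((2 * t + 2).choose (t + 1)) ^ 2 * ((t + 1) * (t + 1)) ^ 2 := by ring
  · subst ht
    have hdiv1 : (2 * t + 1) / 2 = t := by omega
    have hdiv2 : (2 * t + 1 + 2) / 2 = t + 1 := by omega
    rw [hdiv1, hdiv2]
    have h1 : (2 * t + 2) * (2 * t + 1).choose t = (2 * t + 2).choose (t + 1) * (t + 1) := by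
      simpa [Nat.succ_eq_add_one] using Nat.add_one_mul_choose_eq (2 * t + 1) t
    have h2 : (2 * t + 3) * (2 * t + 2).choose (t + 1) = (2 * t + 3).choose (t + 2) * (t + 2) := by
      simpa [Nat.succ_eq_add_one] using Nat.add_one_mul_choose_eq (2 * t + 2) (t + 1)
    have h3 : (2 * t + 3).choose (t + 2) = (2 * t + 3).choose (t + 1) := by
      simpa [show 2 * (t + 1) + 1 = 2 * t + 3 by ring] using Nat.choose_symm_half (t + 1)
    have hcomb : (2 * t + 3).choose (t + 1) * ((t + 1) * (t + 2)) =
        (2 * t + 3) * ((2 * t + 2) * (2 * t + 1).choose t) := by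
      calc (2 * t + 3).choose (t + 1) * ((t + 1) * (t + 2))
          = ((2 * t + 3).choose (t + 2) * (t + 2)) * (t + 1) := by rw [h3]; ring
        _ = ((2 * t + 3) * (2 * t + 2).choose (t + 1)) * (t + 1) := by rw [h2]
        _ = (2 * t + 3) * ((2 * t + 2).choose (t + 1) * (t + 1)) := by ring
        _ = (2 * t + 3) * ((2 * t + 2) * (2 * t + 1).choose t) := by rw [h1]
    have hsq := congrArg (fun x => x ^ 2) hcomb
    have hpos : 0 < ((t + 1) * (t + 2)) ^ 2 := by positivity
    refine Nat.le_of_mul_le_mul_right ?_ hpos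
    have h213 : 2 * t + 1 + 2 = 2 * t + 3 := by ring
    rw [h213]
    calc 16 * (2 * t + 1) * ((2 * t + 1).choose t) ^ 2 * ((t + 1) * (t + 2)) ^ 2
        = (16 * (2 * t + 1) * ((t + 1) * (t + 2)) ^ 2) * ((2 * t + 1).choose t) ^ 2 := by ring
      _ ≤ ((2 * t + 3) * ((2 * t + 3) * (2 * t + 2)) ^ 2) * ((2 * t + 1).choose t) ^ 2 := by
          have : 16 * (2 * t + 1) * ((t + 1) * (t + 2)) ^ 2 ≤
              (2 * t + 3) * ((2 * t + 3) * (2 * t + 2)) ^ 2 := by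
            have hexp : (2 * t + 3) * ((2 * t + 3) * (2 * t + 2)) ^ 2 =
                16 * (2 * t + 1) * ((t + 1) * (t + 2)) ^ 2 + 4 * (t + 1) ^ 2 * (6 * t + 11) := by
              ring
            omega
          exact Nat.mul_le_mul_right _ this
      _ = (2 * t + 3) * ((2 * t + 3) * ((2 * t + 2) * (2 * t + 1).choose t)) ^ 2 := by ring
      _ = (2 * t + 3) * ((2 * t + 3).choose (t + 1) * ((t + 1) * (t + 2))) ^ 2 := by rw [hsq]
      _ = (2 * t + 3) * ((2 * t + 3).choose (t + 1)) ^ 2 * ((t + 1) * (t + 2)) ^ 2 := by ring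

lemma aux_gpow (n : ℕ) (hn : 1 ≤ n) : ∀ d : ℕ,
    16 ^ d * n * (n.choose (n / 2)) ^ 2 ≤ (n + 2 * d) * ((n + 2 * d).choose ((n + 2 * d) / 2)) ^ 2
  | 0 => by simp
  | (d + 1) => by
    have ih := aux_gpow n hn d
    have hstep := aux_gstep (n + 2 * d) (by omega)
    calc 16 ^ (d + 1) * n * (n.choose (n / 2)) ^ 2
        = 16 * (16 ^ d * n * (n.choose (n / 2)) ^ 2) := by ring
      _ ≤ 16 * ((n + 2 * d) * ((n + 2 * d).choose ((n + 2 * d) / 2)) ^ 2) :=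
          Nat.mul_le_mul_left _ ih
      _ = 16 * (n + 2 * d) * ((n + 2 * d).choose ((n + 2 * d) / 2)) ^ 2 := by ring
      _ ≤ (n + 2 * d + 2) * ((n + 2 * d + 2).choose ((n + 2 * d + 2) / 2)) ^ 2 := hstep
      _ = (n + 2 * (d + 1)) * ((n + 2 * (d + 1)).choose ((n + 2 * (d + 1)) / 2)) ^ 2 := by
          rw [show n + 2 * (d + 1) = n + 2 * d + 2 by ring]

lemma aux_gmono (n : ℕ) : n.choose (n / 2) ≤ (n + 1).choose ((n + 1) / 2) :=
  (Nat.choose_mono _ (Nat.le_succ n)).trans (Nat.choose_le_middle _ _)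

lemma aux_key4 (n mm k : ℕ) (h : mm ≤ n) :
    4 ^ mm * (n.choose k) ^ 2 ≤ 8 * ((n + mm).choose ((n + mm) / 2)) ^ 2 := by
  have hg : n.choose k ≤ n.choose (n / 2) := Nat.choose_le_middle k n
  rcases Nat.eq_zero_or_pos n with rfl | hn
  · interval_cases mm
    simp only [pow_zero, one_mul, Nat.add_zero]
    rcases Nat.eq_zero_or_pos k with rfl | hk
    · simp
    · simp [Nat.choose_eq_zero_of_lt hk]
  rcases Nat.even_or_odd mm with ⟨d, hd⟩ | ⟨d, hd⟩
  · -- mm = 2d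
    have hiter := aux_gpow n hn d
    have hle : n + 2 * d ≤ 2 * n := by omega
    refine Nat.le_of_mul_le_mul_right ?_ hn
    calc 4 ^ mm * (n.choose k) ^ 2 * n
        = 4 ^ (2 * d) * n * (n.choose k) ^ 2 := by rw [hd]; ring
      _ ≤ 4 ^ (2 * d) * n * (n.choose (n / 2)) ^ 2 := by
          exact Nat.mul_le_mul_left _ (Nat.pow_le_pow_left hg 2)
      _ = 16 ^ d * n * (n.choose (n / 2)) ^ 2 := by
          rw [show (4:ℕ) ^ (2 * d) = 16 ^ d from by rw [pow_mul]; norm_num]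
      _ ≤ (n + 2 * d) * ((n + 2 * d).choose ((n + 2 * d) / 2)) ^ 2 := aux_gpow n hn d
      _ ≤ 2 * n * ((n + mm).choose ((n + mm) / 2)) ^ 2 := by
          rw [show n + mm = n + 2 * d by omega]
          exact Nat.mul_le_mul_right _ hle
      _ ≤ 8 * ((n + mm).choose ((n + mm) / 2)) ^ 2 * n := by
          calc 2 * n * ((n + mm).choose ((n + mm) / 2)) ^ 2
              = 2 * ((n + mm).choose ((n + mm) / 2)) ^ 2 * n := by ring
            _ ≤ 8 * ((n + mm).choose ((n + mm) / 2)) ^ 2 * n := by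
                have : (2:ℕ) ≤ 8 := by norm_num
                exact Nat.mul_le_mul_right _ (Nat.mul_le_mul_right _ this)
  · -- mm = 2d + 1
    have hiter := aux_gpow (n + 1) (by omega) d
    have hle : n + 1 + 2 * d ≤ 2 * (n + 1) := by omega
    refine Nat.le_of_mul_le_mul_right ?_ (Nat.succ_pos n)
    calc 4 ^ mm * (n.choose k) ^ 2 * (n + 1)
        = 4 * (16 ^ d * (n + 1) * (n.choose k) ^ 2) := by
          rw [hd, show (4:ℕ) ^ (2 * d + 1) = 4 * 16 ^ d from by
            rw [pow_succ, pow_mul]; norm_num [Nat.mul_comm]]; ring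
      _ ≤ 4 * (16 ^ d * (n + 1) * ((n + 1).choose ((n + 1) / 2)) ^ 2) := by
          refine Nat.mul_le_mul_left _ (Nat.mul_le_mul_left _ (Nat.pow_le_pow_left ?_ 2))
          exact hg.trans (aux_gmono n)
      _ ≤ 4 * ((n + 1 + 2 * d) * ((n + 1 + 2 * d).choose ((n + 1 + 2 * d) / 2)) ^ 2) :=
          Nat.mul_le_mul_left _ hiter
      _ = 4 * (n + 1 + 2 * d) * ((n + mm).choose ((n + mm) / 2)) ^ 2 := by
          rw [show n + mm = n + 1 + 2 * d by omega]; ring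
      _ ≤ 8 * (n + 1) * ((n + mm).choose ((n + mm) / 2)) ^ 2 := by
          have : 4 * (n + 1 + 2 * d) ≤ 8 * (n + 1) := by omega
          exact Nat.mul_le_mul_right _ this
      _ = 8 * ((n + mm).choose ((n + mm) / 2)) ^ 2 * (n + 1) := by ring

-- exact hypergeometric identity
lemma aux_vident (V m j : ℕ) (hj : j ≤ m) (hmV : 2 * m ≤ V) :
    (V / 2).choose j * (V - V / 2).choose (m - j) * V.choose (V / 2) =
      m.choose j * (V - m).choose (V / 2 - j) * V.choose m := by
  set a := V / 2 with ha
  set b := V - V / 2 with hb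
  have hja : j ≤ a := by omega
  have hmb : m - j ≤ b := by omega
  have haV : a ≤ V := by omega
  have hmV' : m ≤ V := by omega
  have h1 : V.choose a * a.choose j = V.choose j * (V - j).choose (a - j) :=
    Nat.choose_mul hja
  have h2 : (V - j).choose (a - j) = (V - j).choose b := by
    have h' : a - j ≤ V - j := by omega
    have := Nat.choose_symm h'
    rw [show V - j - (a - j) = b by omega] at this
    exact this.symm
  have h3 : (V - j).choose b * b.choose (m - j) =
      (V - j).choose (m - j) * (V - j - (m - j)).choose (b - (m - j)) :=
    Nat.choose_mul hmb
  have h4 : (V - j - (m - j)).choose (b - (m - j)) = (V - m).choose (a - j) := by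
    rw [show V - j - (m - j) = V - m by omega]
    have h' : b - (m - j) ≤ V - m := by omega
    have := Nat.choose_symm h'
    rw [show V - m - (b - (m - j)) = a - j by omega] at this
    exact this.symm
  have h5 : V.choose m * m.choose j = V.choose j * (V - j).choose (m - j) :=
    Nat.choose_mul hj
  calc a.choose j * b.choose (m - j) * V.choose a
      = (V.choose a * a.choose j) * b.choose (m - j) := by ring
    _ = (V.choose j * (V - j).choose (a - j)) * b.choose (m - j) := by rw [h1]
    _ = V.choose j * ((V - j).choose b * b.choose (m - j)) := by rw [h2]; ring
    _ = V.choose j * ((V - j).choose (m - j) * (V - m).choose (a - j)) := by rw [h3, h4]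
    _ = (V.choose j * (V - j).choose (m - j)) * (V - m).choose (a - j) := by ring
    _ = (V.choose m * m.choose j) * (V - m).choose (a - j) := by rw [h5]
    _ = m.choose j * (V - m).choose (a - j) * V.choose m := by ring

-- per-term bound (Nat version)
lemma aux_perterm (V m j : ℕ) (hj : j ≤ m) (hmV : 2 * m ≤ V) :
    (V / 2).choose j * (V - V / 2).choose (m - j) * 2 ^ m ≤
      3 * (m.choose j * V.choose m) := by
  set L := (V / 2).choose j * (V - V / 2).choose (m - j) with hL
  set B := V.choose (V / 2) with hB
  have hBpos : 0 < B := Nat.choose_pos (by omega)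
  have hident := aux_vident V m j hj hmV
  have hkey := aux_key4 (V - m) m (V / 2 - j) (by omega)
  rw [show V - m + m = V from by omega] at hkey
  have hsq : (L * 2 ^ m) ^ 2 * B ^ 2 ≤ (3 * (m.choose j * V.choose m)) ^ 2 * B ^ 2 := by
    calc (L * 2 ^ m) ^ 2 * B ^ 2
        = (L * B) ^ 2 * 4 ^ m := by
          rw [show (4:ℕ) = 2 ^ 2 from rfl, ← pow_mul, mul_comm 2 m, pow_mul]; ring
      _ = (m.choose j * (V - m).choose (V / 2 - j) * V.choose m) ^ 2 * 4 ^ m := by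
          rw [hL, hident]
      _ = (m.choose j * V.choose m) ^ 2 * (4 ^ m * ((V - m).choose (V / 2 - j)) ^ 2) := by
          ring
      _ ≤ (m.choose j * V.choose m) ^ 2 * (8 * (V.choose (V / 2)) ^ 2) :=
          Nat.mul_le_mul_left _ hkey
      _ ≤ (m.choose j * V.choose m) ^ 2 * (9 * B ^ 2) := by
          refine Nat.mul_le_mul_left _ (Nat.mul_le_mul_right _ (by norm_num))
      _ = (3 * (m.choose j * V.choose m)) ^ 2 * B ^ 2 := by ring
  have hsq' : (L * 2 ^ m) ^ 2 ≤ (3 * (m.choose j * V.choose m)) ^ 2 :=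
    Nat.le_of_mul_le_mul_right hsq (by positivity)
  exact (Nat.pow_le_pow_iff_left (two_ne_zero)).mp hsq'

-- binomial bound from (2+1)^m expansion
lemma aux_bino (m j : ℕ) (hj : j ≤ m) : m.choose j * 2 ^ j ≤ 3 ^ m := by
  have hexp : (3 : ℕ) ^ m = ∑ i ∈ range (m + 1), 2 ^ i * 1 ^ (m - i) * m.choose i := by
    rw [show (3:ℕ) = 2 + 1 from rfl, add_pow]
    simp [Nat.cast_id]
  rw [hexp]
  have hmem : j ∈ range (m + 1) := by simp; omega
  calc m.choose j * 2 ^ j = 2 ^ j * 1 ^ (m - j) * m.choose j := by ring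
    _ ≤ ∑ i ∈ range (m + 1), 2 ^ i * 1 ^ (m - i) * m.choose i :=
      Finset.single_le_sum (f := fun i => 2 ^ i * 1 ^ (m - i) * m.choose i)
        (fun i _ => Nat.zero_le _) hmem

lemma aux_bino' (m j : ℕ) (hj : j ≤ m) : m.choose j * 2 ^ (m - j) ≤ 3 ^ m := by
  have := aux_bino m (m - j) (by omega)
  rwa [Nat.choose_symm hj] at this

lemma aux_numer (m : ℕ) (hm : 24 ≤ m) :
    18 * (2:ℝ) ^ (m / 3) * (3 / 4 : ℝ) ^ m * Real.exp (m / 24) ≤ 2 * m / 3 := by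
  set r : ℝ := 3 / 4 * 2 ^ ((1:ℝ)/3) * Real.exp (1/24) with hrdef
  have hrpos : 0 < r := by positivity
  have hpow : ∀ n : ℕ, r ^ n = (3/4 : ℝ) ^ n * 2 ^ ((n:ℝ)/3) * Real.exp (n / 24) := by
    intro n
    rw [hrdef, mul_pow, mul_pow]
    congr 1
    · congr 1
      rw [← Real.rpow_natCast ((2:ℝ) ^ ((1:ℝ)/3)) n, ← Real.rpow_mul (by norm_num)]
      congr 1
      ring
    · rw [← Real.exp_nat_mul]
      congr 1
      ring
  have hr24 : r ^ 24 = (3/4 : ℝ) ^ 24 * 2 ^ (8:ℕ) * Real.exp 1 := by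
    rw [hpow 24]
    congr 2
    · rw [← Real.rpow_natCast (2:ℝ) 8]
      norm_num
    · norm_num
  have hexp1 := Real.exp_one_lt_d9
  have hbase : 18 * r ^ 24 ≤ 16 := by
    rw [hr24]
    have h1 : (0:ℝ) < (3/4:ℝ)^24 * 2^(8:ℕ) := by positivity
    nlinarith [Real.exp_one_lt_d9, Real.exp_pos 1]
  have hr1 : r ≤ 1 := by
    by_contra h
    push_neg at h
    have h24 : (1:ℝ) < r ^ 24 := one_lt_pow₀ h (by norm_num)
    linarith
  have main : ∀ k : ℕ, 18 * r ^ (24 + k) ≤ 2 * (24 + k : ℕ) / 3 := by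
    intro k
    induction k with
    | zero => norm_num; exact hbase
    | succ k ih =>
      have hnn : (0:ℝ) ≤ 2 * (24 + k : ℕ) / 3 := by positivity
      calc 18 * r ^ (24 + (k + 1))
          = (18 * r ^ (24 + k)) * r := by rw [show 24 + (k+1) = (24 + k) + 1 from rfl, pow_succ]; ring
        _ ≤ (2 * (24 + k : ℕ) / 3) * r := mul_le_mul_of_nonneg_right ih hrpos.le
        _ ≤ (2 * (24 + k : ℕ) / 3) * 1 := mul_le_mul_of_nonneg_left hr1 hnn
        _ ≤ 2 * ((24 + (k + 1) : ℕ) : ℝ) / 3 := by push_cast; linarith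
  have hmmain := main (m - 24)
  rw [show 24 + (m - 24) = m from by omega] at hmmain
  have hJ : (2:ℝ) ^ (m / 3) ≤ (2:ℝ) ^ ((m:ℝ)/3) := by
    rw [← Real.rpow_natCast (2:ℝ) (m / 3)]
    apply Real.rpow_le_rpow_of_exponent_le (by norm_num)
    have h3 : 3 * (m / 3) ≤ m := by omega
    have : (3:ℝ) * ((m / 3 : ℕ) : ℝ) ≤ (m:ℝ) := by exact_mod_cast h3
    linarith
  calc 18 * (2:ℝ) ^ (m / 3) * (3 / 4 : ℝ) ^ m * Real.exp (m / 24)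
      ≤ 18 * (2:ℝ) ^ ((m:ℝ)/3) * (3 / 4 : ℝ) ^ m * Real.exp (m / 24) := by
        have he : (0:ℝ) ≤ Real.exp (m / 24) := (Real.exp_pos _).le
        have h34 : (0:ℝ) ≤ (3/4:ℝ) ^ m := by positivity
        have hst : 18 * (2:ℝ) ^ (m / 3) ≤ 18 * (2:ℝ) ^ ((m:ℝ)/3) := by linarith
        exact mul_le_mul_of_nonneg_right
          (mul_le_mul_of_nonneg_right hst h34) he
    _ = 18 * r ^ m := by rw [hpow m]; ring
    _ ≤ 2 * m / 3 := hmmain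

lemma aux_termR (V m j e : ℕ) (hj : j ≤ m) (he : e ≤ m) (hV : 2 * m ≤ V)
    (hbin : m.choose j * 2 ^ e ≤ 3 ^ m) :
    ((V / 2).choose j : ℝ) * ((V - V / 2).choose (m - j) : ℝ) ≤
      3 * (3/4 : ℝ) ^ m * (V.choose m : ℝ) * 2 ^ (m - e) := by
  have hpR : ((V / 2).choose j : ℝ) * ((V - V / 2).choose (m - j) : ℝ) * 2 ^ m ≤
      3 * ((m.choose j : ℝ) * (V.choose m : ℝ)) := by
    exact_mod_cast aux_perterm V m j hj hV
  have hbR : (m.choose j : ℝ) * 2 ^ e ≤ 3 ^ m := by exact_mod_cast hbin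
  have h2 : (0:ℝ) < 2 ^ m * 2 ^ e := by positivity
  rw [← mul_le_mul_iff_of_pos_right h2]
  have hme : (2:ℝ) ^ (m - e) * 2 ^ e = 2 ^ m := by
    rw [← pow_add]; congr 1; omega
  have key : (3/4:ℝ) ^ m * 2 ^ m * 2 ^ m = 3 ^ m := by
    rw [← mul_pow, ← mul_pow]; norm_num
  have hCpos : (0:ℝ) ≤ (V.choose m : ℝ) := Nat.cast_nonneg _
  calc ((V / 2).choose j : ℝ) * ((V - V / 2).choose (m - j) : ℝ) * (2 ^ m * 2 ^ e)
      = (((V / 2).choose j : ℝ) * ((V - V / 2).choose (m - j) : ℝ) * 2 ^ m) * 2 ^ e := by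
        ring
    _ ≤ (3 * ((m.choose j : ℝ) * (V.choose m : ℝ))) * 2 ^ e :=
        mul_le_mul_of_nonneg_right hpR (by positivity)
    _ = (3 * (V.choose m : ℝ)) * ((m.choose j : ℝ) * 2 ^ e) := by ring
    _ ≤ (3 * (V.choose m : ℝ)) * 3 ^ m :=
        mul_le_mul_of_nonneg_left hbR (by positivity)
    _ = 3 * (3/4 : ℝ) ^ m * (V.choose m : ℝ) * 2 ^ (m - e) * (2 ^ m * 2 ^ e) := by
        rw [show (3:ℝ) * (3/4 : ℝ) ^ m * (V.choose m : ℝ) * 2 ^ (m - e) * (2 ^ m * 2 ^ e)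
            = 3 * (V.choose m : ℝ) * ((3/4:ℝ) ^ m * 2 ^ m * (2 ^ (m - e) * 2 ^ e)) from by
          ring, hme, key]

theorem stmt_6 (V m : ℕ) (hm : 24 ≤ m) (hV : 2 * m ≤ V) :
    (Nat.choose V m : ℝ) * (1 - (2 * (m : ℝ) / 3) * Real.exp (-(m : ℝ) / 24)) ≤
      ∑ j ∈ Finset.Icc (m / 3 + 1) (2 * (m / 3)),
        ((Nat.choose (V / 2) j : ℝ) * (Nat.choose (V - V / 2) (m - j) : ℝ)) := by
  set J := m / 3 with hJdef
  have hJ8 : 8 ≤ J := by omega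
  have h2Jm : 2 * J ≤ m := by omega
  set t : ℕ → ℝ := fun j => ((Nat.choose (V / 2) j : ℝ) * (Nat.choose (V - V / 2) (m - j) : ℝ))
    with ht
  -- Vandermonde
  have hVanN : V.choose m = ∑ j ∈ range (m + 1), (V / 2).choose j * (V - V / 2).choose (m - j) := by
    conv_lhs => rw [show V = V / 2 + (V - V / 2) from by omega]
    rw [Nat.add_choose_eq, Finset.Nat.sum_antidiagonal_eq_sum_range_succ_mk]
  have hVan : (V.choose m : ℝ) = ∑ j ∈ Ico 0 (m + 1), t j := by
    rw [Nat.Ico_zero_eq_range, hVanN]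
    push_cast
    rfl
  -- split
  have hs1 : ∑ j ∈ Ico 0 (J + 1), t j + ∑ j ∈ Ico (J + 1) (2 * J + 1), t j
      = ∑ j ∈ Ico 0 (2 * J + 1), t j :=
    Finset.sum_Ico_consecutive t (by omega) (by omega)
  have hs2 : ∑ j ∈ Ico 0 (2 * J + 1), t j + ∑ j ∈ Ico (2 * J + 1) (m + 1), t j
      = ∑ j ∈ Ico 0 (m + 1), t j :=
    Finset.sum_Ico_consecutive t (by omega) (by omega)
  set K : ℝ := 3 * (3/4 : ℝ) ^ m * (V.choose m : ℝ) with hK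
  have hKpos : 0 ≤ K := by positivity
  -- left tail
  have hTA : ∑ j ∈ Ico 0 (J + 1), t j ≤ K * 2 ^ (J + 1) := by
    calc ∑ j ∈ Ico 0 (J + 1), t j ≤ ∑ j ∈ Ico 0 (J + 1), K * 2 ^ j := by
          refine Finset.sum_le_sum fun j hj => ?_
          simp only [Finset.mem_Ico] at hj
          have hjm : j ≤ m := by omega
          have := aux_termR V m j (m - j) hjm (by omega) hV (aux_bino' m j hjm)
          rwa [show m - (m - j) = j from by omega] at this
      _ = K * ∑ j ∈ Ico 0 (J + 1), (2:ℝ) ^ j := by rw [Finset.mul_sum]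
      _ ≤ K * 2 ^ (J + 1) := by
          refine mul_le_mul_of_nonneg_left ?_ hKpos
          rw [Nat.Ico_zero_eq_range, geom_sum_eq (by norm_num) (J + 1)]
          norm_num
  -- right tail
  have hsumpow : ∑ j ∈ Ico (2 * J + 1) (m + 1), (2:ℝ) ^ (m - j)
      = ∑ i ∈ range (m - 2 * J), (2:ℝ) ^ i := by
    refine Finset.sum_nbij' (fun j => m - j) (fun i => m - i) ?_ ?_ ?_ ?_ ?_
    · intro a ha; simp only [Finset.mem_Ico] at ha; simp only [Finset.mem_range]; omega
    · intro a ha; simp only [Finset.mem_range] at ha; simp only [Finset.mem_Ico]; omega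
    · intro a ha; simp only [Finset.mem_Ico] at ha; show m - (m - a) = a; omega
    · intro a ha; simp only [Finset.mem_range] at ha; show m - (m - a) = a; omega
    · intro a ha; rfl
  have hTB : ∑ j ∈ Ico (2 * J + 1) (m + 1), t j ≤ K * 2 ^ (m - 2 * J) := by
    calc ∑ j ∈ Ico (2 * J + 1) (m + 1), t j
        ≤ ∑ j ∈ Ico (2 * J + 1) (m + 1), K * 2 ^ (m - j) := by
          refine Finset.sum_le_sum fun j hj => ?_
          simp only [Finset.mem_Ico] at hj
          have hjm : j ≤ m := by omega
          exact aux_termR V m j j hjm hjm hV (aux_bino m j hjm)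
      _ = K * ∑ j ∈ Ico (2 * J + 1) (m + 1), (2:ℝ) ^ (m - j) := by rw [Finset.mul_sum]
      _ ≤ K * 2 ^ (m - 2 * J) := by
          refine mul_le_mul_of_nonneg_left ?_ hKpos
          rw [hsumpow, geom_sum_eq (by norm_num) (m - 2 * J)]
          norm_num
  -- numeric bound
  have hnum : K * 2 ^ (J + 1) + K * 2 ^ (m - 2 * J)
      ≤ (V.choose m : ℝ) * ((2 * (m : ℝ) / 3) * Real.exp (-(m : ℝ) / 24)) := by
    have h18 : (2:ℝ) ^ (J + 1) + 2 ^ (m - 2 * J) ≤ 6 * 2 ^ J := by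
      have h1 : (2:ℝ) ^ (J + 1) = 2 * 2 ^ J := by rw [pow_succ]; ring
      have h2 : (2:ℝ) ^ (m - 2 * J) ≤ 2 ^ (J + 2) := by
        apply pow_le_pow_right₀ (by norm_num)
        omega
      have h3 : (2:ℝ) ^ (J + 2) = 4 * 2 ^ J := by rw [pow_add]; ring
      linarith [h2.trans_eq h3, h1]
    have hnumer := aux_numer m hm
    have hexppos : (0:ℝ) < Real.exp ((m:ℝ) / 24) := Real.exp_pos _
    have hnegexp : Real.exp (-(m:ℝ) / 24) = (Real.exp ((m:ℝ) / 24))⁻¹ := by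
      rw [← Real.exp_neg]; congr 1; ring
    have h18' : 18 * (2:ℝ) ^ J * (3/4 : ℝ) ^ m ≤ 2 * m / 3 * Real.exp (-(m:ℝ) / 24) := by
      rw [hnegexp, ← mul_le_mul_iff_of_pos_right hexppos]
      calc 18 * (2:ℝ) ^ J * (3/4 : ℝ) ^ m * Real.exp ((m:ℝ) / 24) ≤ 2 * m / 3 := hnumer
        _ = 2 * m / 3 * (Real.exp ((m:ℝ)/24))⁻¹ * Real.exp ((m:ℝ)/24) := by
            field_simp
    calc K * 2 ^ (J + 1) + K * 2 ^ (m - 2 * J)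
        = 3 * (3/4 : ℝ) ^ m * ((2:ℝ) ^ (J + 1) + 2 ^ (m - 2 * J)) * (V.choose m : ℝ) := by
          rw [hK]; ring
      _ ≤ 3 * (3/4 : ℝ) ^ m * (6 * 2 ^ J) * (V.choose m : ℝ) := by
          have hb : (0:ℝ) ≤ 3 * (3/4 : ℝ) ^ m := by positivity
          have := mul_le_mul_of_nonneg_left h18 hb
          exact mul_le_mul_of_nonneg_right this (Nat.cast_nonneg _)
      _ = (18 * (2:ℝ) ^ J * (3/4 : ℝ) ^ m) * (V.choose m : ℝ) := by ring
      _ ≤ (2 * m / 3 * Real.exp (-(m:ℝ) / 24)) * (V.choose m : ℝ) :=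
          mul_le_mul_of_nonneg_right h18' (Nat.cast_nonneg _)
      _ = (V.choose m : ℝ) * ((2 * (m : ℝ) / 3) * Real.exp (-(m : ℝ) / 24)) := by ring
  -- assemble
  have hgoal : ∑ j ∈ Finset.Icc (m / 3 + 1) (2 * (m / 3)), t j
      = ∑ j ∈ Ico (J + 1) (2 * J + 1), t j := by
    rw [Finset.Ico_add_one_right_eq_Icc]
  rw [show (∑ j ∈ Finset.Icc (m / 3 + 1) (2 * (m / 3)),
      ((Nat.choose (V / 2) j : ℝ) * (Nat.choose (V - V / 2) (m - j) : ℝ)))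
      = ∑ j ∈ Ico (J + 1) (2 * J + 1), t j from hgoal]
  have hexpand : (V.choose m : ℝ) * (1 - (2 * (m : ℝ) / 3) * Real.exp (-(m : ℝ) / 24))
      = (V.choose m : ℝ) - (V.choose m : ℝ) * ((2 * (m : ℝ) / 3) * Real.exp (-(m : ℝ) / 24)) := by
    ring
  linarith [hTA, hTB, hnum, hs1, hs2, hVan]
end

section
/- Let V, m, k, u be natural numbers with k ≤ m, m ≤ k + u, and k + u ≤ V. Then (V.factorial / (k.factorial * u.factorial * (V - k - u).factorial)) * Nat.choose u (m - k) = Nat.choose V m * Nat.choose m k * Nat.choose (V - m) (k + u - m). Equivalently, the multinomial coefficient V!/(k!·u!·(V−k−u)!) times C(u, m−k) equals C(V,m)·C(m,k)·C(V−m, k+u−m). -/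
theorem stmt_7 (V m k u : ℕ) (hkm : k ≤ m) (hmu : m ≤ k + u) (hV : k + u ≤ V) :
    (V.factorial / (k.factorial * u.factorial * (V - k - u).factorial)) *
        Nat.choose u (m - k) =
      Nat.choose V m * Nat.choose m k * Nat.choose (V - m) (k + u - m) := by
  have hA : Nat.choose V k * k.factorial * (V - k).factorial = V.factorial :=
    Nat.choose_mul_factorial_mul_factorial (by omega)
  have hB : Nat.choose (V - k) u * u.factorial * (V - k - u).factorial = (V - k).factorial := by
    have := Nat.choose_mul_factorial_mul_factorial (n := V - k) (k := u) (by omega)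
    simpa [Nat.sub_sub] using this
  have hC : Nat.choose u (m - k) * (m - k).factorial * (k + u - m).factorial = u.factorial := by
    have := Nat.choose_mul_factorial_mul_factorial (n := u) (k := m - k) (by omega)
    have h : u - (m - k) = k + u - m := by omega
    rwa [h] at this
  have hD : Nat.choose m k * k.factorial * (m - k).factorial = m.factorial :=
    Nat.choose_mul_factorial_mul_factorial (by omega)
  have hE : Nat.choose (V - m) (k + u - m) * (k + u - m).factorial * (V - k - u).factorial
      = (V - m).factorial := by
    have := Nat.choose_mul_factorial_mul_factorial (n := V - m) (k := k + u - m) (by omega)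
    have h : V - m - (k + u - m) = V - k - u := by omega
    rwa [h] at this
  have hF : Nat.choose V m * m.factorial * (V - m).factorial = V.factorial :=
    Nat.choose_mul_factorial_mul_factorial (by omega)
  have hdiv : V.factorial / (k.factorial * u.factorial * (V - k - u).factorial)
      = Nat.choose V k * Nat.choose (V - k) u := by
    apply Nat.div_eq_of_eq_mul_left
    · positivity
    · calc V.factorial = Nat.choose V k * k.factorial * (V - k).factorial := hA.symm
        _ = Nat.choose V k * k.factorial *
            (Nat.choose (V - k) u * u.factorial * (V - k - u).factorial) := by rw [hB]
        _ = Nat.choose V k * Nat.choose (V - k) u *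
            (k.factorial * u.factorial * (V - k - u).factorial) := by ring
  rw [hdiv]
  have hDpos : (0:ℤ) < (k.factorial * (m - k).factorial * ((k + u - m).factorial
      * (V - k - u).factorial) : ℕ) := by positivity
  have key : ((Nat.choose V k * Nat.choose (V - k) u * Nat.choose u (m - k) : ℕ) : ℤ) *
      ((k.factorial * (m - k).factorial * ((k + u - m).factorial * (V - k - u).factorial) : ℕ) : ℤ)
      = ((Nat.choose V m * Nat.choose m k * Nat.choose (V - m) (k + u - m) : ℕ) : ℤ) *
      ((k.factorial * (m - k).factorial * ((k + u - m).factorial * (V - k - u).factorial) : ℕ) : ℤ) := by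
    have hA' := congrArg (Nat.cast (R := ℤ)) hA
    have hB' := congrArg (Nat.cast (R := ℤ)) hB
    have hC' := congrArg (Nat.cast (R := ℤ)) hC
    have hD' := congrArg (Nat.cast (R := ℤ)) hD
    have hE' := congrArg (Nat.cast (R := ℤ)) hE
    have hF' := congrArg (Nat.cast (R := ℤ)) hF
    push_cast at hA' hB' hC' hD' hE' hF' ⊢
    linear_combination
      ((Nat.choose V k : ℤ) * (Nat.choose (V - k) u) * k.factorial * (V - k - u).factorial) * hC'
      + ((Nat.choose V k : ℤ) * k.factorial) * hB' + hA'
      - ((Nat.choose V m : ℤ) * (Nat.choose (V - m) (k + u - m)) * (k + u - m).factorial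
          * (V - k - u).factorial) * hD'
      - ((Nat.choose V m : ℤ) * m.factorial) * hE' - hF'
  have := mul_right_cancel₀ (ne_of_gt hDpos) key
  exact_mod_cast this
end

section
/- For all natural numbers U, V, n with V ≥ 1, we have Nat.choose (U / V) n * V ^ n ≤ Nat.choose U n, where U / V denotes integer division. -/
theorem stmt_8 (U V n : ℕ) (hV : 1 ≤ V) :
    Nat.choose (U / V) n * V ^ n ≤ Nat.choose U n := by
  have key : (U / V).descFactorial n * V ^ n ≤ U.descFactorial n := by
    have hVpow : V ^ n = ∏ _i ∈ Finset.range n, V := by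
      rw [Finset.prod_const, Finset.card_range]
    rw [Nat.descFactorial_eq_prod_range, Nat.descFactorial_eq_prod_range, hVpow,
      ← Finset.prod_mul_distrib]
    apply Finset.prod_le_prod'
    intro i _
    calc (U / V - i) * V = U / V * V - i * V := Nat.sub_mul _ _ _
      _ ≤ U - i := tsub_le_tsub (Nat.div_mul_le_self U V)
          (Nat.le_mul_of_pos_right i hV)
  rw [Nat.descFactorial_eq_factorial_mul_choose, Nat.descFactorial_eq_factorial_mul_choose,
    Nat.mul_assoc] at key
  exact Nat.le_of_mul_le_mul_left key n.factorial_pos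
end
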